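/- Let A = ⟨Q, Σ⟩ be a DFA with |Q| = n and let 1 ≤ k < n. Then the set XD_k(A) := {(excl(w), dupl(w)) : w ∈ Σ*, |excl(w)| = k} satisfies |XD_k(A)| ≤ C(n, k) · Σ_{d=1}^{min(k, n−k)} C(n−k, d), where C(·,·) denotes the binomial coefficient. Consequently, |XD_k(A)| < 2^k · C(n, k) if k ≥ n−k, and |XD_k(A)| < C(n, k)² if k < n−k. -/

import Mathlib

open Finset

/-- The action of a word (list of letters) on a state, applying letters left to right. -/
def act {Q A : Type*} (δ : Q → A → Q) (q : Q) (w : List A) : Q := w.foldl δ q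

/-- The image of a set of states under the action of a word. -/
def img {Q A : Type*} [DecidableEq Q] (δ : Q → A → Q) (P : Finset Q) (w : List A) : Finset Q :=
  P.image (fun q => act δ q w)

/-- `excl δ w = Q \ Q·w`. -/
def excl {Q A : Type*} [Fintype Q] [DecidableEq Q] (δ : Q → A → Q) (w : List A) : Finset Q :=
  Finset.univ \ img δ Finset.univ w

/-- `dupl δ w` : the set of states with at least two preimages under the action of `w`. -/
def dupl {Q A : Type*} [Fintype Q] [DecidableEq Q] (δ : Q → A → Q) (w : List A) : Finset Q :=
  Finset.univ.filter (fun p => ∃ q₁ q₂ : Q, q₁ ≠ q₂ ∧ act δ q₁ w = p ∧ act δ q₂ w = p)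

/-- A DFA is completely reachable if every nonempty subset of states is the image of the
full state set under the action of some word. -/
def CompletelyReachable {Q A : Type*} [Fintype Q] [DecidableEq Q] (δ : Q → A → Q) : Prop :=
  ∀ P : Finset Q, P.Nonempty → ∃ w : List A, img δ Finset.univ w = P

/-- `XD δ k` is the set of pairs (excl(w), dupl(w)) over all words w of defect k. -/
def XD {Q A : Type*} [Fintype Q] [DecidableEq Q] (δ : Q → A → Q) (k : ℕ) :
    Set (Finset Q × Finset Q) :=
  {p | ∃ w : List A, excl δ w = p.1 ∧ dupl δ w = p.2 ∧ (excl δ w).card = k}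

section aux
variable {Q A : Type*} [Fintype Q] [DecidableEq Q] (δ : Q → A → Q) (w : List A)

lemma dupl_subset_img : dupl δ w ⊆ img δ Finset.univ w := by
  intro p hp
  simp only [dupl, mem_filter] at hp
  obtain ⟨_, q₁, q₂, hne, h1, h2⟩ := hp
  exact mem_image.mpr ⟨q₁, mem_univ _, h1⟩

lemma excl_eq_compl : excl δ w = (img δ Finset.univ w)ᶜ := by
  rw [excl, compl_eq_univ_sdiff]

lemma card_img_add_card_excl :
    (img δ Finset.univ w).card + (excl δ w).card = Fintype.card Q := by
  rw [excl_eq_compl, card_add_card_compl]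

lemma card_img_add_card_dupl_le :
    (img δ Finset.univ w).card + (dupl δ w).card ≤ Fintype.card Q := by
  classical
  have hmaps : ∀ q ∈ (univ : Finset Q), act δ q w ∈ img δ Finset.univ w := fun q _ =>
    mem_image_of_mem _ (mem_univ q)
  have hcard := Finset.card_eq_sum_card_fiberwise hmaps
  rw [← Finset.card_univ, hcard]
  have hle : ∀ p ∈ img δ Finset.univ w,
      (if p ∈ dupl δ w then 2 else 1) ≤ (univ.filter fun q => act δ q w = p).card := by
    intro p hp
    by_cases hd : p ∈ dupl δ w
    · simp only [hd, if_true]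
      simp only [dupl, mem_filter] at hd
      obtain ⟨-, q₁, q₂, hne, h1, h2⟩ := hd
      have hsub : ({q₁, q₂} : Finset Q) ⊆ univ.filter fun q => act δ q w = p := by
        intro x hx
        simp only [mem_insert, mem_singleton] at hx
        rcases hx with rfl | rfl <;> simp [h1, h2]
      calc 2 = ({q₁, q₂} : Finset Q).card := (card_pair hne).symm
        _ ≤ _ := card_le_card hsub
    · simp only [hd, if_false]
      obtain ⟨q, -, hq⟩ := mem_image.mp hp
      exact card_pos.mpr ⟨q, mem_filter.mpr ⟨mem_univ q, hq⟩⟩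
  calc (img δ Finset.univ w).card + (dupl δ w).card
      = ∑ p ∈ img δ Finset.univ w, (if p ∈ dupl δ w then 2 else 1) := by
        have : ∀ p, (if p ∈ dupl δ w then 2 else 1) = 1 + (if p ∈ dupl δ w then 1 else 0) := by
          intro p; split <;> rfl
        rw [Finset.sum_congr rfl (fun p _ => this p), Finset.sum_add_distrib,
          Finset.sum_const, Finset.sum_ite_mem, smul_eq_mul, mul_one,
          Finset.inter_eq_right.mpr (dupl_subset_img δ w)]
        simp
    _ ≤ _ := Finset.sum_le_sum hle

lemma dupl_nonempty (h : (img δ Finset.univ w).card < Fintype.card Q) :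
    (dupl δ w).Nonempty := by
  classical
  obtain ⟨q₁, -, q₂, -, hne, heq⟩ :=
    Finset.exists_ne_map_eq_of_card_lt_of_maps_to (t := img δ Finset.univ w)
      (by rw [Finset.card_univ]; exact h) (fun q _ => mem_image_of_mem (fun q => act δ q w) (mem_univ q))
  exact ⟨act δ q₁ w, mem_filter.mpr ⟨mem_univ _, q₁, q₂, hne, rfl, heq.symm⟩⟩

end aux

lemma sum_Icc_choose_self (t : ℕ) : ∑ d ∈ Finset.Icc 1 t, t.choose d = 2 ^ t - 1 := by
  have hins : insert 0 (Finset.Icc 1 t) = Finset.range (t + 1) := by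
    ext x; simp [Nat.lt_succ_iff]; omega
  have h0 : 0 ∉ Finset.Icc 1 t := by simp
  have := Nat.sum_range_choose t
  rw [← hins, Finset.sum_insert h0, Nat.choose_zero_right] at this
  omega

lemma sum_Icc_choose_lt (n k : ℕ) (hk1 : 1 ≤ k) (hkn : k ≤ n) :
    ∑ d ∈ Finset.Icc 1 k, (n - k).choose d < n.choose k := by
  have hvdm : n.choose k = ∑ d ∈ Finset.range (k + 1), (n - k).choose d * k.choose (k - d) := by
    have h1 : (n - k) + k = n := by omega
    calc n.choose k = ((n - k) + k).choose k := by rw [h1]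
      _ = ∑ d ∈ Finset.range (k + 1), (n - k).choose d * k.choose (k - d) := by
        rw [Nat.add_choose_eq, Finset.Nat.sum_antidiagonal_eq_sum_range_succ
          (fun i j => (n - k).choose i * k.choose j)]
  have hins : insert 0 (Finset.Icc 1 k) = Finset.range (k + 1) := by
    ext x; simp [Nat.lt_succ_iff]; omega
  have h0 : 0 ∉ Finset.Icc 1 k := by simp
  rw [hvdm, ← hins, Finset.sum_insert h0, Nat.choose_zero_right, Nat.sub_zero,
    Nat.choose_self, one_mul]
  have hle : ∑ d ∈ Finset.Icc 1 k, (n - k).choose d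
      ≤ ∑ d ∈ Finset.Icc 1 k, (n - k).choose d * k.choose (k - d) := by
    apply Finset.sum_le_sum
    intro d hd
    exact Nat.le_mul_of_pos_right _ (Nat.choose_pos (by omega))
  omega


/-- Bounds on the cardinality of XD_k(A) for a DFA with n states and 1 ≤ k < n. -/
theorem XD_card_bounds {Q A : Type*} [Fintype Q] [DecidableEq Q] [Fintype A]
    (δ : Q → A → Q) (n k : ℕ) (hn : n = Fintype.card Q) (hk1 : 1 ≤ k) (hkn : k < n) :
    (XD δ (A := A) k).ncard ≤
        n.choose k * ∑ d ∈ Finset.Icc 1 (min k (n - k)), (n - k).choose d ∧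
    (n - k ≤ k → (XD δ (A := A) k).ncard < 2 ^ k * n.choose k) ∧
    (k < n - k → (XD δ (A := A) k).ncard < n.choose k ^ 2) := by
  classical
  set m := min k (n - k) with hm
  set S := ∑ d ∈ Finset.Icc 1 m, (n - k).choose d with hS
  set T : Finset (Finset Q × Finset Q) :=
    (Finset.univ.powersetCard k).biUnion (fun E =>
      (Eᶜ.powerset.filter (fun D => D.card ∈ Finset.Icc 1 m)).image (fun D => (E, D))) with hT
  -- XD ⊆ T
  have hsub : XD δ (A := A) k ⊆ ↑T := by
    rintro ⟨p1, p2⟩ ⟨w, he, hd, hc⟩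
    simp only at he hd hc
    subst he hd
    have himg : (img δ Finset.univ w).card + k = n := by
      have := card_img_add_card_excl δ w
      rw [hc, ← hn] at this; exact this
    have hcd : (img δ Finset.univ w).card + (dupl δ w).card ≤ n := by
      rw [hn]; exact card_img_add_card_dupl_le δ w
    have hdk : (dupl δ w).card ≤ k := by omega
    have hdnk : (dupl δ w).card ≤ n - k := by
      have := card_le_card (dupl_subset_img δ w); omega
    have hne : (dupl δ w).Nonempty := by
      apply dupl_nonempty
      rw [← hn]; omega
    simp only [hT, Finset.coe_biUnion, Set.mem_iUnion, Finset.mem_coe]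
    refine ⟨excl δ w, by simp [Finset.mem_powersetCard_univ, hc], ?_⟩
    refine Finset.mem_image.mpr ⟨dupl δ w, ?_, rfl⟩
    refine Finset.mem_filter.mpr ⟨?_, ?_⟩
    · rw [Finset.mem_powerset, excl_eq_compl, compl_compl]
      exact dupl_subset_img δ w
    · simp only [Finset.mem_Icc]
      exact ⟨Finset.card_pos.mpr hne, by omega⟩
  have hmain : (XD δ (A := A) k).ncard ≤ n.choose k * S := by
    have h1 : (XD δ (A := A) k).ncard ≤ T.card := by
      have := Set.ncard_le_ncard hsub T.finite_toSet
      rwa [Set.ncard_coe_finset] at this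
    refine h1.trans ?_
    calc T.card ≤ ∑ E ∈ Finset.univ.powersetCard k,
        ((Eᶜ.powerset.filter (fun D => D.card ∈ Finset.Icc 1 m)).image (fun D => (E, D))).card :=
          Finset.card_biUnion_le
      _ ≤ ∑ E ∈ Finset.univ.powersetCard k, S := by
          apply Finset.sum_le_sum
          intro E hE
          refine (Finset.card_image_le).trans ?_
          have hEc : (Eᶜ : Finset Q).card = n - k := by
            rw [Finset.card_compl, ← hn, Finset.mem_powersetCard_univ.mp hE]
          have hsub2 : Eᶜ.powerset.filter (fun D => D.card ∈ Finset.Icc 1 m)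
              ⊆ (Finset.Icc 1 m).biUnion (fun d => Eᶜ.powersetCard d) := by
            intro D hD
            rw [Finset.mem_filter, Finset.mem_powerset] at hD
            exact Finset.mem_biUnion.mpr ⟨D.card, hD.2, Finset.mem_powersetCard.mpr ⟨hD.1, rfl⟩⟩
          refine (Finset.card_le_card hsub2).trans ?_
          refine Finset.card_biUnion_le.trans ?_
          rw [hS]
          apply Finset.sum_le_sum
          intro d _
          rw [Finset.card_powersetCard, hEc]
      _ = n.choose k * S := by
          rw [Finset.sum_const, smul_eq_mul, Finset.card_powersetCard, Finset.card_univ, ← hn]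
  refine ⟨hmain, ?_, ?_⟩
  · intro hcase
    have hmeq : m = n - k := by omega
    have hSeq : S = 2 ^ (n - k) - 1 := by rw [hS, hmeq, sum_Icc_choose_self]
    have hcpos : 0 < n.choose k := Nat.choose_pos hkn.le
    have hlt : S < 2 ^ k := by
      rw [hSeq]
      have h2 : 2 ^ (n - k) ≤ 2 ^ k := Nat.pow_le_pow_right (by norm_num) hcase
      have : 0 < 2 ^ (n - k) := Nat.pow_pos (by norm_num)
      omega
    calc (XD δ (A := A) k).ncard ≤ n.choose k * S := hmain
      _ < n.choose k * 2 ^ k := mul_lt_mul_of_pos_left hlt hcpos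
      _ = 2 ^ k * n.choose k := mul_comm _ _
  · intro hcase
    have hmeq : m = k := by omega
    have hcpos : 0 < n.choose k := Nat.choose_pos hkn.le
    have hlt : S < n.choose k := by
      rw [hS, hmeq]; exact sum_Icc_choose_lt n k hk1 hkn.le
    calc (XD δ (A := A) k).ncard ≤ n.choose k * S := hmain
      _ < n.choose k * n.choose k := mul_lt_mul_of_pos_left hlt hcpos
      _ = n.choose k ^ 2 := (sq _).symm
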